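/- For every real x ≥ 1 and integer N ≥ 5, the function f(x) = ((N+2x+1)^2/4) · (N+2x−3)^4 / ((N+2x−3)^2 + 4x)^2 is nondecreasing in x on [1,∞). -/

import Mathlib

private lemma hydrogen_hasDerivAt (a x : ℝ) (hpos : ((a + 2*x - 3)^2 + 4*x) ≠ 0) :
    HasDerivAt (fun x : ℝ =>
        (a + 2 * x + 1) ^ 2 / 4 * (a + 2 * x - 3) ^ 4 /
          ((a + 2 * x - 3) ^ 2 + 4 * x) ^ 2)
      ((((2*(a+2*x+1)*2)/4 * (a+2*x-3)^4 +
          (a+2*x+1)^2/4 * (4*(a+2*x-3)^3*2)) * ((a+2*x-3)^2+4*x)^2 -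
        (a+2*x+1)^2/4 * (a+2*x-3)^4 *
          (2*((a+2*x-3)^2+4*x)*(2*(a+2*x-3)*2+4))) /
        (((a+2*x-3)^2+4*x)^2)^2) x := by
  have hid : HasDerivAt (fun x : ℝ => x) 1 x := hasDerivAt_id x
  have h2x : HasDerivAt (fun x : ℝ => 2*x) 2 x := by
    simpa using hid.const_mul (2:ℝ)
  have hu : HasDerivAt (fun x : ℝ => a + 2*x - 3) 2 x := (h2x.const_add a).sub_const 3
  have hA : HasDerivAt (fun x : ℝ => (a + 2*x + 1)^2) (2*(a+2*x+1)*2) x := by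
    have := ((h2x.const_add a).add_const 1).fun_pow 2
    simpa using this
  have hB : HasDerivAt (fun x : ℝ => (a + 2*x - 3)^4) (4*(a+2*x-3)^3*2) x := by
    have := hu.fun_pow 4
    simpa using this
  have hnum : HasDerivAt (fun x : ℝ => (a + 2*x + 1)^2/4 * (a + 2*x - 3)^4)
      ((2*(a+2*x+1)*2)/4 * (a+2*x-3)^4 + (a+2*x+1)^2/4 * (4*(a+2*x-3)^3*2)) x :=
    (hA.div_const 4).mul hB
  have h4x : HasDerivAt (fun x : ℝ => 4*x) 4 x := by
    simpa using hid.const_mul (4:ℝ)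
  have hD : HasDerivAt (fun x : ℝ => (a + 2*x - 3)^2 + 4*x) (2*(a+2*x-3)*2 + 4) x := by
    have := (hu.fun_pow 2).fun_add h4x
    simpa using this
  have hden : HasDerivAt (fun x : ℝ => ((a + 2*x - 3)^2 + 4*x)^2)
      (2*((a+2*x-3)^2+4*x)*(2*(a+2*x-3)*2+4)) x := by
    have := hD.fun_pow 2
    simpa [mul_assoc] using this
  exact hnum.div hden (pow_ne_zero 2 hpos)

theorem monotone_hydrogen_f (N : ℕ) (hN : 5 ≤ N) :
    MonotoneOn
      (fun x : ℝ =>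
        ((N : ℝ) + 2 * x + 1) ^ 2 / 4 * ((N : ℝ) + 2 * x - 3) ^ 4 /
          (((N : ℝ) + 2 * x - 3) ^ 2 + 4 * x) ^ 2)
      (Set.Ici (1 : ℝ)) := by
  have hN5 : (5:ℝ) ≤ (N:ℝ) := by exact_mod_cast hN
  set a : ℝ := (N:ℝ) with ha
  have hdpos : ∀ x : ℝ, 1 ≤ x → 0 < (a + 2*x - 3)^2 + 4*x := by
    intro x hx
    nlinarith [sq_nonneg (a + 2*x - 3)]
  apply monotoneOn_of_deriv_nonneg (convex_Ici 1)
  · apply ContinuousOn.div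
    · fun_prop
    · fun_prop
    · intro x hx
      exact pow_ne_zero 2 (ne_of_gt (hdpos x hx))
  · rw [interior_Ici]
    intro x hx
    exact (hydrogen_hasDerivAt a x
      (ne_of_gt (hdpos x hx.le))).differentiableAt.differentiableWithinAt
  · rw [interior_Ici]
    intro x hx
    have hx1 : (1:ℝ) ≤ x := hx.le
    have hD := hdpos x hx1
    rw [(hydrogen_hasDerivAt a x (ne_of_gt hD)).deriv]
    apply div_nonneg _ (by positivity)
    have key : (((2*(a+2*x+1)*2)/4 * (a+2*x-3)^4 +
          (a+2*x+1)^2/4 * (4*(a+2*x-3)^3*2)) * ((a+2*x-3)^2+4*x)^2 -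
        (a+2*x+1)^2/4 * (a+2*x-3)^4 *
          (2*((a+2*x-3)^2+4*x)*(2*(a+2*x-3)*2+4)))
        = ((a+2*x-3)^2+4*x) * (((a+2*x-3)+4)*(a+2*x-3)^3) *
            ((a+2*x-3)*((a+2*x-3)-4)*((a+2*x-3)+2) + 12*(a+2*x-3)*x + 32*x) := by
      ring
    rw [key]
    have hu4 : (4:ℝ) ≤ a + 2*x - 3 := by linarith
    have h1 : (0:ℝ) ≤ (a+2*x-3)^2+4*x := le_of_lt hD
    have h2 : (0:ℝ) ≤ ((a+2*x-3)+4)*(a+2*x-3)^3 := by positivity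
    have h3 : (0:ℝ) ≤ (a+2*x-3)*((a+2*x-3)-4)*((a+2*x-3)+2) + 12*(a+2*x-3)*x + 32*x := by
      nlinarith
    exact mul_nonneg (mul_nonneg h1 h2) h3
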